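/- Let f : [N]^d → ℝ be L♮-convex (discrete midpoint convex). Then f satisfies translation submodularity: for all x, y ∈ [N]^d and all nonnegative integers α such that (x - α·1)∨y and x∧(y + α·1) lie in [N]^d, f(x) + f(y) ≥ f((x - α·1)∨y) + f(x∧(y + α·1)), where ∨ and ∧ denote componentwise max and min and 1 is the all-ones vector. In particular (α = 0), f is submodular on [N]^d. -/

import Mathlib

namespace Stmt16

def ee {m : ℕ} (i : Fin m) : Fin m → ℤ := Pi.single i 1

lemma ee_apply {m : ℕ} (i k : Fin m) : ee i k = if k = i then 1 else 0 := by
  simp [ee, Pi.single_apply]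

/-- Diminishing returns from local submodularity. -/
theorem DR {m : ℕ} (h : (Fin m → ℤ) → ℝ)
    (H : ∀ (z : Fin m → ℤ) (i j : Fin m), i ≠ j →
      h z + h (z + ee i + ee j) ≤ h (z + ee i) + h (z + ee j)) :
    ∀ (n : ℕ) (a b : Fin m → ℤ) (i : Fin m), (∀ k, a k ≤ b k) → a i = b i →
      (∑ k, (b k - a k).toNat) ≤ n → h (b + ee i) + h a ≤ h (a + ee i) + h b := by
  intro n
  induction n with
  | zero =>
    intro a b i hab hai hsum
    have hba : b = a := by
      funext k
      have h1 : (b k - a k).toNat = 0 :=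
        Finset.sum_eq_zero_iff.mp (Nat.le_zero.mp hsum) k (Finset.mem_univ k)
      have := hab k
      omega
    rw [hba]
  | succ n IH =>
    intro a b i hab hai hsum
    by_cases hba : b = a
    · rw [hba]
    · have hj : ∃ j, a j < b j := by
        by_contra hc
        push_neg at hc
        exact hba (funext fun k => le_antisymm (hc k) (hab k))
      obtain ⟨j, hjlt⟩ := hj
      have hij : i ≠ j := fun he => by rw [he] at hai; omega
      have key := H (b - ee j) i j hij
      have e1 : b - ee j + ee j = b := by abel
      have e2 : b - ee j + ee i + ee j = b + ee i := by abel
      rw [e1, e2] at key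
      have hab' : ∀ k, a k ≤ (b - ee j) k := by
        intro k
        have := hab k
        by_cases hk : k = j
        · subst hk; simp only [Pi.sub_apply, ee_apply, if_pos rfl, eq_self_iff_true, if_true]; omega
        · simp only [Pi.sub_apply, ee_apply, if_neg hk]; omega
      have hai' : a i = (b - ee j) i := by
        simp only [Pi.sub_apply, ee_apply, if_neg hij]; omega
      have hmeas : (∑ k, ((b - ee j) k - a k).toNat) ≤ n := by
        have hlt : (∑ k, ((b - ee j) k - a k).toNat) < ∑ k, (b k - a k).toNat := by
          apply Finset.sum_lt_sum
          · intro k _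
            by_cases hk : k = j
            · subst hk; simp only [Pi.sub_apply, ee_apply, if_pos rfl, eq_self_iff_true, if_true]; omega
            · simp only [Pi.sub_apply, ee_apply, if_neg hk]; omega
          · exact ⟨j, Finset.mem_univ j, by
              simp only [Pi.sub_apply, ee_apply, if_pos rfl, eq_self_iff_true, if_true]; omega⟩
        exact Nat.lt_succ_iff.mp (lt_of_lt_of_le hlt hsum)
      have IH' := IH a (b - ee j) i hab' hai' hmeas
      linarith

/-- Local submodularity implies submodularity. -/
theorem submod {m : ℕ} (h : (Fin m → ℤ) → ℝ)
    (H : ∀ (z : Fin m → ℤ) (i j : Fin m), i ≠ j →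
      h z + h (z + ee i + ee j) ≤ h (z + ee i) + h (z + ee j)) :
    ∀ (n : ℕ) (x y : Fin m → ℤ), (∑ k, (x k - y k).toNat) ≤ n →
      h (fun k => max (x k) (y k)) + h (fun k => min (x k) (y k)) ≤ h x + h y := by
  intro n
  induction n with
  | zero =>
    intro x y hsum
    have hxy : ∀ k, x k ≤ y k := by
      intro k
      have h1 : (x k - y k).toNat = 0 :=
        Finset.sum_eq_zero_iff.mp (Nat.le_zero.mp hsum) k (Finset.mem_univ k)
      omega
    have e1 : (fun k => max (x k) (y k)) = y := funext fun k => by have := hxy k; omega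
    have e2 : (fun k => min (x k) (y k)) = x := funext fun k => by have := hxy k; omega
    rw [e1, e2]; linarith
  | succ n IH =>
    intro x y hsum
    by_cases hle : ∀ k, x k ≤ y k
    · have e1 : (fun k => max (x k) (y k)) = y := funext fun k => by have := hle k; omega
      have e2 : (fun k => min (x k) (y k)) = x := funext fun k => by have := hle k; omega
      rw [e1, e2]; linarith
    · push_neg at hle
      obtain ⟨i, hi⟩ := hle
      have hmeas : (∑ k, (x k - (y + ee i) k).toNat) ≤ n := by
        have hlt : (∑ k, (x k - (y + ee i) k).toNat) < ∑ k, (x k - y k).toNat := by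
          apply Finset.sum_lt_sum
          · intro k _
            by_cases hk : k = i
            · subst hk; simp only [Pi.add_apply, ee_apply, if_pos rfl, eq_self_iff_true, if_true]; omega
            · simp only [Pi.add_apply, ee_apply, if_neg hk]; omega
          · exact ⟨i, Finset.mem_univ i, by
              simp only [Pi.add_apply, ee_apply, if_pos rfl, eq_self_iff_true, if_true]; omega⟩
        exact Nat.lt_succ_iff.mp (lt_of_lt_of_le hlt hsum)
      have IH' := IH x (y + ee i) hmeas
      have e1 : (fun k => max (x k) ((y + ee i) k)) = (fun k => max (x k) (y k)) := by
        funext k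
        by_cases hk : k = i
        · subst hk; simp only [Pi.add_apply, ee_apply, if_pos rfl, eq_self_iff_true, if_true]; omega
        · simp only [Pi.add_apply, ee_apply, if_neg hk]; omega
      have e2 : (fun k => min (x k) ((y + ee i) k)) = (fun k => min (x k) (y k)) + ee i := by
        funext k
        by_cases hk : k = i
        · subst hk; simp only [Pi.add_apply, ee_apply, if_pos rfl, eq_self_iff_true, if_true]; omega
        · simp only [Pi.add_apply, ee_apply, if_neg hk]; omega
      rw [e1, e2] at IH'
      have hDR := DR h H (∑ k, (y k - (fun k => min (x k) (y k)) k).toNat)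
        (fun k => min (x k) (y k)) y i (fun k => by show min (x k) (y k) ≤ y k; omega)
        (by show min (x i) (y i) = y i; omega) le_rfl
      linarith

def cl (N t : ℤ) : ℤ := max 1 (min t N)

def pen (N t : ℤ) : ℤ := max (1 - t) 0 + max (t - N) 0

noncomputable def fhat {d : ℕ} (N : ℤ) (f : (Fin d → ℤ) → ℝ) (S : ℝ)
    (z : Fin d → ℤ) : ℝ :=
  f (fun i => cl N (z i)) + (4 * S + 1) * ((∑ i, pen N (z i) : ℤ) : ℝ)

section Local
variable {d : ℕ} (N : ℤ) (hN : 2 ≤ N) (f : (Fin d → ℤ) → ℝ) (S : ℝ)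

include hN in
lemma cl_mem (t : ℤ) : 1 ≤ cl N t ∧ cl N t ≤ N := by unfold cl; omega

include hN in
lemma localA
    (hL : ∀ x y : Fin d → ℤ, (∀ i, 1 ≤ x i ∧ x i ≤ N) → (∀ i, 1 ≤ y i ∧ y i ≤ N) →
      f (fun i => (x i + y i + 1) / 2) + f (fun i => (x i + y i) / 2) ≤ f x + f y)
    (z : Fin d → ℤ) (i j : Fin d) (hij : i ≠ j) :
    fhat N f S z + fhat N f S (z + ee i + ee j)
      ≤ fhat N f S (z + ee i) + fhat N f S (z + ee j) := by
  -- penalty part: exact cancellation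
  have hpen : (∑ k, pen N ((z + ee i) k)) + (∑ k, pen N ((z + ee j) k))
      = (∑ k, pen N (z k)) + (∑ k, pen N ((z + ee i + ee j) k)) := by
    rw [← Finset.sum_add_distrib, ← Finset.sum_add_distrib]
    apply Finset.sum_congr rfl
    intro k _
    simp only [Pi.add_apply, ee_apply]
    by_cases hki : k = i <;> by_cases hkj : k = j
    · exact absurd (hki.symm.trans hkj) hij
    all_goals
      simp only [hki, hkj, hij, Ne.symm hij, eq_self_iff_true, if_true, if_false,
        add_zero, zero_add]
    all_goals (unfold pen; omega)
  -- f part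
  have hf : f (fun k => cl N (z k)) + f (fun k => cl N ((z + ee i + ee j) k))
      ≤ f (fun k => cl N ((z + ee i) k)) + f (fun k => cl N ((z + ee j) k)) := by
    by_cases hdi : cl N (z i + 1) = cl N (z i) + 1
    · by_cases hdj : cl N (z j + 1) = cl N (z j) + 1
      · have key := hL (fun k => cl N ((z + ee i) k)) (fun k => cl N ((z + ee j) k))
          (fun k => cl_mem N hN _) (fun k => cl_mem N hN _)
        have e1 : (fun k => (cl N ((z + ee i) k) + cl N ((z + ee j) k) + 1) / 2)
            = (fun k => cl N ((z + ee i + ee j) k)) := by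
          funext k
          simp only [Pi.add_apply, ee_apply]
          by_cases hki : k = i <;> by_cases hkj : k = j
          · exact absurd (hki.symm.trans hkj) hij
          all_goals
            simp only [hki, hkj, hij, Ne.symm hij, eq_self_iff_true, if_true, if_false,
              add_zero, zero_add]
          all_goals try omega
        have e2 : (fun k => (cl N ((z + ee i) k) + cl N ((z + ee j) k)) / 2)
            = (fun k => cl N (z k)) := by
          funext k
          simp only [Pi.add_apply, ee_apply]
          by_cases hki : k = i <;> by_cases hkj : k = j
          · exact absurd (hki.symm.trans hkj) hij
          all_goals
            simp only [hki, hkj, hij, Ne.symm hij, eq_self_iff_true, if_true, if_false,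
              add_zero, zero_add]
          all_goals try omega
        rw [e1, e2] at key
        linarith
      · have hdj' : cl N (z j + 1) = cl N (z j) := by unfold cl at hdj ⊢; omega
        have e1 : (fun k => cl N ((z + ee j) k)) = (fun k => cl N (z k)) := by
          funext k
          simp only [Pi.add_apply, ee_apply]
          by_cases hkj : k = j
          all_goals
            simp only [hkj, eq_self_iff_true, if_true, if_false, add_zero, zero_add]
          omega
        have e2 : (fun k => cl N ((z + ee i + ee j) k)) = (fun k => cl N ((z + ee i) k)) := by
          funext k
          simp only [Pi.add_apply, ee_apply]
          by_cases hki : k = i <;> by_cases hkj : k = j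
          · exact absurd (hki.symm.trans hkj) hij
          all_goals
            simp only [hki, hkj, hij, Ne.symm hij, eq_self_iff_true, if_true, if_false,
              add_zero, zero_add]
          all_goals try omega
        rw [e1, e2]
        linarith
    · have hdi' : cl N (z i + 1) = cl N (z i) := by unfold cl at hdi ⊢; omega
      have e1 : (fun k => cl N ((z + ee i) k)) = (fun k => cl N (z k)) := by
        funext k
        simp only [Pi.add_apply, ee_apply]
        by_cases hki : k = i
        all_goals
          simp only [hki, eq_self_iff_true, if_true, if_false, add_zero, zero_add]
        omega
      have e2 : (fun k => cl N ((z + ee i + ee j) k)) = (fun k => cl N ((z + ee j) k)) := by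
        funext k
        simp only [Pi.add_apply, ee_apply]
        by_cases hki : k = i <;> by_cases hkj : k = j
        · exact absurd (hki.symm.trans hkj) hij
        all_goals
          simp only [hki, hkj, hij, Ne.symm hij, eq_self_iff_true, if_true, if_false,
            add_zero, zero_add]
        all_goals try omega
      rw [e1, e2]
  -- assemble
  unfold fhat
  have hpenR : ((∑ k, pen N ((z + ee i) k) : ℤ) : ℝ) + ((∑ k, pen N ((z + ee j) k) : ℤ) : ℝ)
      = ((∑ k, pen N (z k) : ℤ) : ℝ) + ((∑ k, pen N ((z + ee i + ee j) k) : ℤ) : ℝ) := by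
    exact_mod_cast congrArg (fun t : ℤ => (t : ℝ)) hpen
  have E2 : (4 * S + 1) * ((∑ k, pen N ((z + ee i) k) : ℤ) : ℝ)
        + (4 * S + 1) * ((∑ k, pen N ((z + ee j) k) : ℤ) : ℝ)
      = (4 * S + 1) * ((∑ k, pen N (z k) : ℤ) : ℝ)
        + (4 * S + 1) * ((∑ k, pen N ((z + ee i + ee j) k) : ℤ) : ℝ) := by
    rw [← mul_add, hpenR]; ring
  linarith

include hN in
lemma localB
    (hL : ∀ x y : Fin d → ℤ, (∀ i, 1 ≤ x i ∧ x i ≤ N) → (∀ i, 1 ≤ y i ∧ y i ≤ N) →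
      f (fun i => (x i + y i + 1) / 2) + f (fun i => (x i + y i) / 2) ≤ f x + f y)
    (hS0 : 0 ≤ S)
    (hS : ∀ w : Fin d → ℤ, (∀ i, 1 ≤ w i ∧ w i ≤ N) → |f w| ≤ S)
    (z : Fin d → ℤ) (j : Fin d) :
    fhat N f S z + fhat N f S (z - 1 + ee j) ≤ fhat N f S (z - 1) + fhat N f S (z + ee j) := by
  have hpen : (∑ k, pen N ((z - 1) k)) + (∑ k, pen N ((z + ee j) k))
      = (∑ k, pen N (z k)) + (∑ k, pen N ((z - 1 + ee j) k))
        + (pen N (z j - 1) + pen N (z j + 1) - 2 * pen N (z j)) := by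
    rw [← Finset.sum_add_distrib]
    have hterm : ∀ k ∈ Finset.univ, pen N ((z - 1) k) + pen N ((z + ee j) k)
        = (pen N (z k) + pen N ((z - 1 + ee j) k))
          + (if k = j then pen N (z j - 1) + pen N (z j + 1) - 2 * pen N (z j) else 0) := by
      intro k _
      simp only [Pi.sub_apply, Pi.add_apply, Pi.one_apply, ee_apply]
      by_cases hkj : k = j
      · simp only [hkj, eq_self_iff_true, if_true]
        unfold pen; omega
      · simp only [hkj, if_false, add_zero]
        unfold pen; omega
    rw [Finset.sum_congr rfl hterm, Finset.sum_add_distrib, Finset.sum_add_distrib,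
      Finset.sum_ite_eq' Finset.univ j]
    simp only [Finset.mem_univ, if_true]
    try ring
  have hpenR : ((∑ k, pen N ((z - 1) k) : ℤ) : ℝ) + ((∑ k, pen N ((z + ee j) k) : ℤ) : ℝ)
      = ((∑ k, pen N (z k) : ℤ) : ℝ) + ((∑ k, pen N ((z - 1 + ee j) k) : ℤ) : ℝ)
        + ((pen N (z j - 1) + pen N (z j + 1) - 2 * pen N (z j) : ℤ) : ℝ) := by
    exact_mod_cast congrArg (fun t : ℤ => (t : ℝ)) hpen
  have E2 : (4 * S + 1) * ((∑ k, pen N ((z - 1) k) : ℤ) : ℝ)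
        + (4 * S + 1) * ((∑ k, pen N ((z + ee j) k) : ℤ) : ℝ)
      = (4 * S + 1) * ((∑ k, pen N (z k) : ℤ) : ℝ)
        + (4 * S + 1) * ((∑ k, pen N ((z - 1 + ee j) k) : ℤ) : ℝ)
        + (4 * S + 1) * ((pen N (z j - 1) + pen N (z j + 1) - 2 * pen N (z j) : ℤ) : ℝ) := by
    rw [← mul_add, hpenR]; ring
  have hfkey : f (fun k => cl N (z k)) + f (fun k => cl N ((z - 1 + ee j) k))
      ≤ f (fun k => cl N ((z - 1) k)) + f (fun k => cl N ((z + ee j) k))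
        + (4 * S + 1) * ((pen N (z j - 1) + pen N (z j + 1) - 2 * pen N (z j) : ℤ) : ℝ) := by
    by_cases hz : z j = 1 ∨ z j = N
    · -- penalty slack is exactly 1; use the crude bound
      have hs1 : pen N (z j - 1) + pen N (z j + 1) - 2 * pen N (z j) = 1 := by
        unfold pen; omega
      rw [hs1]
      have b1 := hS (fun k => cl N (z k)) (fun k => cl_mem N hN _)
      have b2 := hS (fun k => cl N ((z - 1 + ee j) k)) (fun k => cl_mem N hN _)
      have b3 := hS (fun k => cl N ((z - 1) k)) (fun k => cl_mem N hN _)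
      have b4 := hS (fun k => cl N ((z + ee j) k)) (fun k => cl_mem N hN _)
      rw [abs_le] at b1 b2 b3 b4
      push_cast
      linarith
    · push_neg at hz
      have key := hL (fun k => cl N ((z - 1) k)) (fun k => cl N ((z + ee j) k))
        (fun k => cl_mem N hN _) (fun k => cl_mem N hN _)
      have e1 : (fun k => (cl N ((z - 1) k) + cl N ((z + ee j) k) + 1) / 2)
          = (fun k => cl N (z k)) := by
        funext k
        simp only [Pi.sub_apply, Pi.add_apply, Pi.one_apply, ee_apply]
        by_cases hkj : k = j
        · simp only [hkj, eq_self_iff_true, if_true]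
          unfold cl; omega
        · simp only [hkj, if_false, add_zero]
          unfold cl; omega
      have e2 : (fun k => (cl N ((z - 1) k) + cl N ((z + ee j) k)) / 2)
          = (fun k => cl N ((z - 1 + ee j) k)) := by
        funext k
        simp only [Pi.sub_apply, Pi.add_apply, Pi.one_apply, ee_apply]
        by_cases hkj : k = j
        · simp only [hkj, eq_self_iff_true, if_true]
          unfold cl; omega
        · simp only [hkj, if_false, add_zero]
          unfold cl; omega
      rw [e1, e2] at key
      have hsge : (0 : ℤ) ≤ pen N (z j - 1) + pen N (z j + 1) - 2 * pen N (z j) := by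
        unfold pen; omega
      have hterm : (0 : ℝ) ≤ (4 * S + 1)
          * ((pen N (z j - 1) + pen N (z j + 1) - 2 * pen N (z j) : ℤ) : ℝ) :=
        mul_nonneg (by linarith) (by exact_mod_cast hsge)
      linarith
  unfold fhat
  linarith

def phi {d : ℕ} (w : Fin (d + 1) → ℤ) : Fin d → ℤ := fun k => w k.succ - w 0

lemma phi_add {d : ℕ} (w u : Fin (d + 1) → ℤ) : phi (w + u) = phi w + phi u := by
  funext k; simp [phi]; ring

lemma phi_e0 {d : ℕ} : phi (ee (0 : Fin (d + 1))) = -1 := by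
  funext k
  simp [phi, ee_apply, Fin.succ_ne_zero]

lemma phi_esucc {d : ℕ} (a : Fin d) : phi (ee a.succ) = ee a := by
  funext k
  simp only [phi, ee_apply, Fin.succ_inj]
  have h0 : (0 : Fin (d + 1)) ≠ a.succ := Ne.symm (Fin.succ_ne_zero a)
  simp [h0]

include hN in
lemma hloc
    (hL : ∀ x y : Fin d → ℤ, (∀ i, 1 ≤ x i ∧ x i ≤ N) → (∀ i, 1 ≤ y i ∧ y i ≤ N) →
      f (fun i => (x i + y i + 1) / 2) + f (fun i => (x i + y i) / 2) ≤ f x + f y)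
    (hS0 : 0 ≤ S)
    (hS : ∀ w : Fin d → ℤ, (∀ i, 1 ≤ w i ∧ w i ≤ N) → |f w| ≤ S)
    (z : Fin (d + 1) → ℤ) (i j : Fin (d + 1)) (hij : i ≠ j) :
    fhat N f S (phi z) + fhat N f S (phi (z + ee i + ee j))
      ≤ fhat N f S (phi (z + ee i)) + fhat N f S (phi (z + ee j)) := by
  simp only [phi_add]
  rcases Fin.eq_zero_or_eq_succ i with hi | ⟨a, rfl⟩
  · rcases Fin.eq_zero_or_eq_succ j with hj | ⟨b, rfl⟩
    · exact absurd (hi.trans hj.symm) hij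
    · subst hi
      rw [phi_e0, phi_esucc]
      have h1 : phi z + -1 + ee b = phi z - 1 + ee b := by abel
      have h2 : phi z + -1 = phi z - 1 := by abel
      rw [h1, h2]
      exact localB N hN f S hL hS0 hS (phi z) b
  · rcases Fin.eq_zero_or_eq_succ j with hj | ⟨b, rfl⟩
    · subst hj
      rw [phi_e0, phi_esucc]
      have h1 : phi z + ee a + -1 = phi z - 1 + ee a := by abel
      have h2 : phi z + -1 = phi z - 1 := by abel
      rw [h1, h2]
      have := localB N hN f S hL hS0 hS (phi z) a
      linarith
    · rw [phi_esucc, phi_esucc]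
      have hab : a ≠ b := fun he => hij (by rw [he])
      exact localA N hN f S hL (phi z) a b hab

lemma fhat_box (w : Fin d → ℤ) (hw : ∀ i, 1 ≤ w i ∧ w i ≤ N) : fhat N f S w = f w := by
  unfold fhat
  have e1 : (fun i => cl N (w i)) = w := funext fun i => by
    have := hw i; unfold cl; omega
  have e2 : (∑ i, pen N (w i)) = 0 := Finset.sum_eq_zero fun i _ => by
    have := hw i; unfold pen; omega
  rw [e1, e2]
  simp

end Local

end Stmt16

/-- An L♮-convex (discrete midpoint convex) function f on the integer box
[N]^d satisfies translation submodularity: f(x) + f(y) ≥ f((x-α1)∨y) + f(x∧(y+α1))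
whenever the two combinations stay in the box. In particular (α = 0) f is submodular.
Here `(s+1)/2` and `s/2` are the componentwise ceiling and floor of s/2 on ℤ. -/
theorem stmt_16 (d : ℕ) (N : ℤ) (hN : 2 ≤ N) (f : (Fin d → ℤ) → ℝ)
    (hL : ∀ x y : Fin d → ℤ, (∀ i, 1 ≤ x i ∧ x i ≤ N) → (∀ i, 1 ≤ y i ∧ y i ≤ N) →
      f (fun i => (x i + y i + 1) / 2) + f (fun i => (x i + y i) / 2) ≤ f x + f y) :
    ∀ (x y : Fin d → ℤ) (α : ℤ), 0 ≤ α →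
      (∀ i, 1 ≤ x i ∧ x i ≤ N) → (∀ i, 1 ≤ y i ∧ y i ≤ N) →
      (∀ i, 1 ≤ max (x i - α) (y i) ∧ max (x i - α) (y i) ≤ N) →
      (∀ i, 1 ≤ min (x i) (y i + α) ∧ min (x i) (y i + α) ≤ N) →
      f (fun i => max (x i - α) (y i)) + f (fun i => min (x i) (y i + α)) ≤ f x + f y := by
  intro x y α hα hx hy hu hv
  have hne : (Fintype.piFinset fun _ : Fin d => Finset.Icc (1 : ℤ) N).Nonempty :=
    ⟨fun _ => 1, by
      rw [Fintype.mem_piFinset]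
      intro i
      rw [Finset.mem_Icc]
      exact ⟨le_rfl, show (1 : ℤ) ≤ N by omega⟩⟩
  set S : ℝ := (Fintype.piFinset fun _ : Fin d => Finset.Icc (1 : ℤ) N).sup' hne
      (fun w => |f w|) with hSdef
  have hSb : ∀ w : Fin d → ℤ, (∀ i, 1 ≤ w i ∧ w i ≤ N) → |f w| ≤ S := by
    intro w hw
    rw [hSdef]
    refine Finset.le_sup' (fun w => |f w|) ?_
    rw [Fintype.mem_piFinset]
    intro i
    rw [Finset.mem_Icc]
    exact hw i
  have hS0 : (0 : ℝ) ≤ S :=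
    le_trans (abs_nonneg (f (fun _ => 1))) (hSb (fun _ => 1) (fun i => ⟨le_rfl, show (1 : ℤ) ≤ N by omega⟩))
  have H : ∀ (z : Fin (d + 1) → ℤ) (i j : Fin (d + 1)), i ≠ j →
      (fun w => Stmt16.fhat N f S (Stmt16.phi w)) z
        + (fun w => Stmt16.fhat N f S (Stmt16.phi w)) (z + Stmt16.ee i + Stmt16.ee j)
      ≤ (fun w => Stmt16.fhat N f S (Stmt16.phi w)) (z + Stmt16.ee i)
        + (fun w => Stmt16.fhat N f S (Stmt16.phi w)) (z + Stmt16.ee j) :=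
    fun z i j hij => Stmt16.hloc N hN f S hL hS0 hSb z i j hij
  set P : Fin (d + 1) → ℤ := Fin.cons 0 x with hP
  set Q : Fin (d + 1) → ℤ := Fin.cons α (fun i => y i + α) with hQ
  have main := Stmt16.submod (fun w => Stmt16.fhat N f S (Stmt16.phi w)) H
    (∑ k, (P k - Q k).toNat) P Q le_rfl
  have eP : Stmt16.phi P = x := by
    funext i
    simp [Stmt16.phi, hP, Fin.cons_succ, Fin.cons_zero]
  have eQ : Stmt16.phi Q = y := by
    funext i
    simp [Stmt16.phi, hQ, Fin.cons_succ, Fin.cons_zero]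
  have eU : Stmt16.phi (fun k => max (P k) (Q k)) = (fun i => max (x i - α) (y i)) := by
    funext i
    simp only [Stmt16.phi, hP, hQ, Fin.cons_succ, Fin.cons_zero]
    omega
  have eV : Stmt16.phi (fun k => min (P k) (Q k)) = (fun i => min (x i) (y i + α)) := by
    funext i
    simp only [Stmt16.phi, hP, hQ, Fin.cons_succ, Fin.cons_zero]
    omega
  rw [eP, eQ, eU, eV] at main
  rw [Stmt16.fhat_box N f S x hx, Stmt16.fhat_box N f S y hy,
    Stmt16.fhat_box N f S _ hu, Stmt16.fhat_box N f S _ hv] at main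
  exact main
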